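/- The Beurling–Malliavin density equals its restriction to sequences of substantial intervals whose endpoint ratios tend to 1: b(Λ) = b_{{1}}(Λ), where b_{{1}}(Λ) is the density b_A(Λ) computed with A = {1}. -/

import Mathlib

open Filter Topology

/-- The counting function of the sequence `Λ`: `F_Λ(t) = #{k : Λ k ≤ t}` for `t > 0`
and `0` otherwise. -/
noncomputable def countFn (Λ : ℕ → ℝ) (t : ℝ) : ℝ :=
  if 0 < t then (Nat.card {k : ℕ | Λ k ≤ t} : ℝ) else 0

/-- A sequence of intervals `((a n, b n])_n` with `0 < a n < b n ≤ a (n+1)` is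
*substantial* if `Σ (b n / a n - 1)² = ∞`. -/
def IsSubstantial (a b : ℕ → ℝ) : Prop :=
  (∀ n, 0 < a n ∧ a n < b n ∧ b n ≤ a (n + 1)) ∧
    ¬ Summable (fun n => (b n / a n - 1) ^ 2)

/-- `limsup_n b n / a n`, taken in the extended reals. -/
noncomputable def ratioLimsup (a b : ℕ → ℝ) : EReal :=
  Filter.limsup (fun n => ((b n / a n : ℝ) : EReal)) Filter.atTop

/-- `ℓ_I = liminf_n (F_Λ(b n) - F_Λ(a n)) / (b n - a n)`, in the extended reals. -/
noncomputable def ellOf (Λ : ℕ → ℝ) (a b : ℕ → ℝ) : EReal :=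
  Filter.liminf
    (fun n => (((countFn Λ (b n) - countFn Λ (a n)) / (b n - a n) : ℝ) : EReal))
    Filter.atTop

/-- The set `𝔯_A` of admissible rates `R ≥ 0`. -/
def RSet (Λ : ℕ → ℝ) (A : Set EReal) : Set ℝ :=
  {R | 0 ≤ R ∧ ∃ a b : ℕ → ℝ, IsSubstantial a b ∧ ratioLimsup a b ∈ A ∧
    ∀ᶠ n in Filter.atTop, R ≤ (countFn Λ (b n) - countFn Λ (a n)) / (b n - a n)}

/-- The (restricted) Beurling–Malliavin density `b_A(Λ) = sup 𝔯_A`. -/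
noncomputable def bmDensity (Λ : ℕ → ℝ) (A : Set EReal) : EReal :=
  sSup ((fun r : ℝ => (r : EReal)) '' RSet Λ A)

lemma mediant (x y : ℕ → ℝ) (m : ℕ) (hm : 0 < m) (hy : ∀ i < m, 0 < y i) (R : ℝ)
    (h : R ≤ (∑ i ∈ Finset.range m, x i) / (∑ i ∈ Finset.range m, y i)) :
    ∃ i < m, R ≤ x i / y i := by
  by_contra hc
  push_neg at hc
  have hYpos : 0 < ∑ i ∈ Finset.range m, y i :=
    Finset.sum_pos (fun i hi => hy i (Finset.mem_range.mp hi)) ⟨0, Finset.mem_range.mpr hm⟩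
  have hX : (∑ i ∈ Finset.range m, x i) < R * ∑ i ∈ Finset.range m, y i := by
    rw [Finset.mul_sum]
    refine Finset.sum_lt_sum_of_nonempty ⟨0, Finset.mem_range.mpr hm⟩ (fun i hi => ?_)
    have hyi := hy i (Finset.mem_range.mp hi)
    have := hc i (Finset.mem_range.mp hi)
    rw [div_lt_iff₀ hyi] at this
    linarith
  rw [le_div_iff₀ hYpos] at h
  linarith

lemma stepA (Δ : ℕ → ℝ) (hΔ : ∀ n, 0 ≤ Δ n) (h : ¬ Summable (fun n => Δ n ^ 2))
    (δ : ℝ) (hδ : 0 < δ) : ¬ Summable (fun n => min (Δ n) δ ^ 2) := by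
  intro hs
  have hten : Filter.Tendsto (fun n => min (Δ n) δ ^ 2) atTop (nhds 0) := hs.tendsto_atTop_zero
  have hev : ∀ᶠ n in atTop, min (Δ n) δ ^ 2 < δ ^ 2 :=
    hten.eventually_lt_const (by positivity)
  have hev2 : ∀ᶠ n in atTop, min (Δ n) δ ^ 2 = Δ n ^ 2 := by
    filter_upwards [hev] with n hn
    rcases le_total (Δ n) δ with h1 | h1
    · rw [min_eq_left h1]
    · rw [min_eq_right h1] at hn ⊢; exact absurd hn (lt_irrefl _)
  rcases eventually_atTop.mp hev2 with ⟨N, hN⟩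
  apply h
  rw [← summable_nat_add_iff N]
  refine (Summable.congr ((summable_nat_add_iff N).mpr hs) ?_)
  intro n
  exact hN (n + N) (Nat.le_add_left _ _)

lemma stepB (f : ℕ → ℝ) (hf : ∀ n, 0 ≤ f n) (h : ¬ Summable f) (M : ℕ) :
    ∃ N, M < N ∧ 1 ≤ ∑ i ∈ Finset.Ico M N, f i := by
  have := (not_summable_iff_tendsto_nat_atTop_of_nonneg hf).mp h
  have hS : ∀ᶠ N in atTop, (∑ i ∈ Finset.range M, f i) + 1 ≤ ∑ i ∈ Finset.range N, f i :=
    this.eventually_ge_atTop _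
  rcases (hS.and (eventually_gt_atTop M)).exists with ⟨N, h1, h2⟩
  refine ⟨N, h2, ?_⟩
  rw [Finset.sum_Ico_eq_sub _ h2.le]
  linarith

lemma blocks (Δ : ℕ → ℝ) (hΔ : ∀ n, 0 ≤ Δ n) (h : ¬ Summable fun n => Δ n ^ 2) :
    ∃ δfn : ℕ → ℝ, (∀ n, 0 < δfn n ∧ δfn n ≤ 1) ∧ Tendsto δfn atTop (nhds 0) ∧
      ¬ Summable (fun n => min (Δ n) (δfn n / 3) ^ 2) := by
  classical
  set g : ℕ → ℕ → ℝ := fun j n => min (Δ n) ((1/2 : ℝ) ^ j / 3) ^ 2 with hgdef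
  have hgnonneg : ∀ j n, 0 ≤ g j n := fun j n => sq_nonneg _
  have hg : ∀ j, ¬ Summable (g j) := fun j => stepA Δ hΔ h _ (by positivity)
  have hstep : ∀ j M, ∃ N, M < N ∧ 1 ≤ ∑ i ∈ Finset.Ico M N, g j i :=
    fun j M => stepB (g j) (hgnonneg j) (hg j) M
  set N : ℕ → ℕ := fun j => Nat.rec 0 (fun j' Nj => (hstep j' Nj).choose) j with hNdef
  have hN0 : N 0 = 0 := rfl
  have hNsucc : ∀ j, N j < N (j+1) ∧ 1 ≤ ∑ i ∈ Finset.Ico (N j) (N (j+1)), g j i :=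
    fun j => (hstep j (N j)).choose_spec
  have hNmono : StrictMono N := strictMono_nat_of_lt_succ (fun j => (hNsucc j).1)
  have hNle : ∀ j, j ≤ N j := fun j => hNmono.le_apply
  set jdx : ℕ → ℕ := fun n => Nat.findGreatest (fun j => N j ≤ n) n with hjdxdef
  have key1 : ∀ n, N (jdx n) ≤ n := by
    intro n
    have := Nat.findGreatest_spec (P := fun j => N j ≤ n) (m := 0) (Nat.zero_le n)
      (by simp [hN0])
    exact this
  have key2 : ∀ j n, N j ≤ n → j ≤ jdx n := fun j n hjn =>
    Nat.le_findGreatest (le_trans (hNle j) hjn) hjn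
  have key3 : ∀ j n, n < N (j+1) → jdx n ≤ j := by
    intro j n hn
    by_contra hc
    push_neg at hc
    exact absurd (key1 n) (not_le.mpr (lt_of_lt_of_le hn (hNmono.monotone hc)))
  have keyblock : ∀ j n, N j ≤ n → n < N (j+1) → jdx n = j :=
    fun j n h1 h2 => le_antisymm (key3 j n h2) (key2 j n h1)
  refine ⟨fun n => (1/2 : ℝ) ^ (jdx n), fun n => ⟨by positivity, ?_⟩, ?_, ?_⟩
  · exact pow_le_one₀ (by norm_num) (by norm_num)
  · have hjt : Tendsto jdx atTop atTop := by
      refine tendsto_atTop_atTop.mpr (fun j => ⟨N j, fun n hn => key2 j n hn⟩)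
    exact (tendsto_pow_atTop_nhds_zero_of_lt_one (by norm_num) (by norm_num)).comp hjt
  · set F : ℕ → ℝ := fun n => min (Δ n) ((1/2:ℝ) ^ (jdx n) / 3) ^ 2 with hFdef
    have hFnonneg : ∀ n, 0 ≤ F n := fun n => sq_nonneg _
    have hpartial : ∀ J : ℕ, (J : ℝ) ≤ ∑ i ∈ Finset.range (N J), F i := by
      intro J
      induction J with
      | zero =>
        simp only [Nat.cast_zero, hN0]
        simp
      | succ J ih =>
        have hsplit : ∑ i ∈ Finset.range (N J), F i + ∑ i ∈ Finset.Ico (N J) (N (J+1)), F i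
            = ∑ i ∈ Finset.range (N (J+1)), F i := by
          simp only [Finset.range_eq_Ico]
          exact Finset.sum_Ico_consecutive _ (Nat.zero_le _) (hNmono.monotone (Nat.le_succ J))
        have hblk : ∑ i ∈ Finset.Ico (N J) (N (J+1)), F i
            = ∑ i ∈ Finset.Ico (N J) (N (J+1)), g J i := by
          refine Finset.sum_congr rfl (fun i hi => ?_)
          rcases Finset.mem_Ico.mp hi with ⟨h1, h2⟩
          simp [hFdef, hgdef, keyblock J i h1 h2]
        push_cast
        rw [← hsplit, hblk]
        have := (hNsucc J).2
        linarith
    intro hs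
    rcases exists_nat_gt (∑' n, F n) with ⟨J, hJ⟩
    have h1 : ∑ i ∈ Finset.range (N J), F i ≤ ∑' n, F n :=
      hs.sum_le_tsum _ (fun i _ => hFnonneg i)
    have h2 := hpartial J
    linarith
lemma sqrt_lb {δ : ℝ} (hδ : 0 < δ) (hδ1 : δ ≤ 1) : 1 + δ/3 ≤ (1+δ) ^ ((1:ℝ)/2) := by
  set s := (1+δ) ^ ((1:ℝ)/2) with hs
  have hspos : 0 < s := Real.rpow_pos_of_pos (by linarith) _
  have hss : s * s = 1 + δ := by
    rw [hs, ← Real.rpow_add (by linarith)]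
    norm_num
  nlinarith [sq_nonneg (s - (1 + δ/3))]

lemma subdivide (F : ℝ → ℝ) (R A B δ : ℝ) (hA : 0 < A) (hAB : A < B)
    (hδ : 0 < δ) (hδ1 : δ ≤ 1) :
    ∃ A' B' : ℝ, A ≤ A' ∧ A' < B' ∧ B' ≤ B ∧
      B' / A' ≤ 1 + δ ∧
      min (B / A - 1) (δ / 3) ≤ B' / A' - 1 ∧
      (R ≤ (F B - F A) / (B - A) → R ≤ (F B' - F A') / (B' - A')) := by
  classical
  set r : ℝ := B / A with hrdef
  have hr : 1 < r := (one_lt_div hA).mpr hAB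
  have hrpos : 0 < r := by linarith
  have hex : ∃ m : ℕ, r ≤ (1+δ) ^ (m+1) := by
    obtain ⟨n, hn⟩ := pow_unbounded_of_one_lt r (by linarith : (1:ℝ) < 1 + δ)
    exact ⟨n, le_of_lt (lt_of_lt_of_le hn (pow_le_pow_right₀ (by linarith) (Nat.le_succ n)))⟩
  set k := Nat.find hex with hkdef
  set m := k + 1 with hmdef
  have hm : r ≤ (1+δ) ^ m := Nat.find_spec hex
  have hmR : (0:ℝ) < (m:ℝ) := by positivity
  have hmne : (m:ℝ) ≠ 0 := ne_of_gt hmR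
  set c : ℕ → ℝ := fun i => A * r ^ ((i:ℝ)/(m:ℝ)) with hcdef
  have hcpos : ∀ i, 0 < c i := fun i => mul_pos hA (Real.rpow_pos_of_pos hrpos _)
  have hc0 : c 0 = A := by simp [hcdef]
  have hcm : c m = B := by
    have : ((m:ℝ)/(m:ℝ)) = 1 := div_self hmne
    simp [hcdef, this, Real.rpow_one, hrdef]
    field_simp
  set ρ : ℝ := r ^ ((1:ℝ)/(m:ℝ)) with hρdef
  have hratio : ∀ i : ℕ, c (i+1) / c i = ρ := by
    intro i
    rw [hcdef]
    simp only
    rw [mul_div_mul_left _ _ (ne_of_gt hA), ← Real.rpow_sub hrpos]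
    congr 1
    push_cast
    field_simp
    ring
  have hρ1 : 1 < ρ := by
    rw [hρdef]
    have : (0:ℝ) < 1/(m:ℝ) := by positivity
    calc (1:ℝ) = r ^ (0:ℝ) := by rw [Real.rpow_zero]
    _ < r ^ ((1:ℝ)/(m:ℝ)) := Real.rpow_lt_rpow_of_exponent_lt hr this
  have hρδ : ρ ≤ 1 + δ := by
    have h1 : ρ ≤ ((1+δ)^m : ℝ) ^ ((1:ℝ)/(m:ℝ)) :=
      Real.rpow_le_rpow (le_of_lt hrpos) hm (by positivity)
    have h2 : ((1+δ)^m : ℝ) ^ ((1:ℝ)/(m:ℝ)) = 1 + δ := by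
      rw [← Real.rpow_natCast (1+δ) m, ← Real.rpow_mul (by linarith)]
      rw [mul_one_div, div_self hmne, Real.rpow_one]
    rw [h2] at h1; exact h1
  have hρlow : min (r - 1) (δ/3) ≤ ρ - 1 := by
    rcases Nat.eq_zero_or_pos k with hk0 | hkpos
    · have : ρ = r := by
        rw [hρdef, hmdef, hk0]
        norm_num
      rw [this]
      exact min_le_left _ _
    · have hnot : (1+δ)^k < r := by
        have h := Nat.find_min hex (show k - 1 < k from Nat.sub_lt hkpos one_pos)
        rw [Nat.sub_add_cancel hkpos] at h
        exact lt_of_not_ge h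
      have hkR : (0:ℝ) < (k:ℝ) := by positivity
      have hm2k : (1:ℝ)/(2*(k:ℝ)) ≤ (1:ℝ)/(m:ℝ) := by
        apply div_le_div_of_nonneg_left one_pos.le (by positivity)
        push_cast [hmdef]
        have : (1:ℝ) ≤ (k:ℝ) := by exact_mod_cast hkpos
        linarith
      have h1 : r ^ ((1:ℝ)/(2*(k:ℝ))) ≤ ρ :=
        Real.rpow_le_rpow_of_exponent_le hr.le hm2k
      have h2 : ((1+δ)^k : ℝ) ^ ((1:ℝ)/(2*(k:ℝ))) ≤ r ^ ((1:ℝ)/(2*(k:ℝ))) :=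
        Real.rpow_le_rpow (by positivity) hnot.le (by positivity)
      have h3 : ((1+δ)^k : ℝ) ^ ((1:ℝ)/(2*(k:ℝ))) = (1+δ) ^ ((1:ℝ)/2) := by
        rw [← Real.rpow_natCast (1+δ) k, ← Real.rpow_mul (by linarith)]
        congr 1
        field_simp
      have h4 := sqrt_lb hδ hδ1
      rw [h3] at h2
      have : 1 + δ/3 ≤ ρ := le_trans h4 (le_trans h2 h1)
      have hmin : min (r-1) (δ/3) ≤ δ/3 := min_le_right _ _
      linarith
  -- structural facts about pieces
  have hclt : ∀ i : ℕ, c i < c (i+1) := by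
    intro i
    have := hratio i
    have h1 : 1 < c (i+1) / c i := by rw [this]; exact hρ1
    exact (one_lt_div (hcpos i)).mp h1
  have hcmono : Monotone c := monotone_nat_of_le_succ (fun i => (hclt i).le)
  have piece : ∀ i : ℕ, i < m → A ≤ c i ∧ c i < c (i+1) ∧ c (i+1) ≤ B := by
    intro i hi
    refine ⟨?_, hclt i, ?_⟩
    · rw [← hc0]; exact hcmono (Nat.zero_le i)
    · rw [← hcm]; exact hcmono hi
  by_cases hgood : R ≤ (F B - F A) / (B - A)
  · -- use mediant to pick a good piece
    have hy : ∀ i < m, 0 < c (i+1) - c i := fun i _ => sub_pos.mpr (hclt i)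
    have hsx : ∑ i ∈ Finset.range m, (F (c (i+1)) - F (c i)) = F B - F A := by
      rw [Finset.sum_range_sub (fun i => F (c i)) m, hc0, hcm]
    have hsy : ∑ i ∈ Finset.range m, (c (i+1) - c i) = B - A := by
      rw [Finset.sum_range_sub c m, hc0, hcm]
    obtain ⟨i, hi, hri⟩ := mediant (fun i => F (c (i+1)) - F (c i)) (fun i => c (i+1) - c i)
      m (Nat.succ_pos k) hy R (by rw [hsx, hsy]; exact hgood)
    obtain ⟨p1, p2, p3⟩ := piece i hi
    exact ⟨c i, c (i+1), p1, p2, p3, by rw [hratio i]; exact hρδ,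
      by rw [hratio i]; exact hρlow, fun _ => hri⟩
  · obtain ⟨p1, p2, p3⟩ := piece 0 (Nat.succ_pos k)
    exact ⟨c 0, c 1, p1, p2, p3, by rw [hratio 0]; exact hρδ,
      by rw [hratio 0]; exact hρlow, fun hg => absurd hg hgood⟩

lemma RSet_mono (Λ : ℕ → ℝ) {A B : Set EReal} (h : A ⊆ B) : RSet Λ A ⊆ RSet Λ B := by
  rintro R ⟨h0, a, b, h1, h2, h3⟩
  exact ⟨h0, a, b, h1, h h2, h3⟩

lemma RSet_subset (Λ : ℕ → ℝ) :
    RSet Λ (Set.Ici (1 : EReal)) ⊆ RSet Λ {(1 : EReal)} := by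
  rintro R ⟨hR0, a, b, ⟨hstruct, hsub⟩, -, hrate⟩
  have hapos : ∀ n, 0 < a n := fun n => (hstruct n).1
  have hab : ∀ n, a n < b n := fun n => (hstruct n).2.1
  have hΔpos : ∀ n, 0 < b n / a n - 1 := fun n =>
    sub_pos.mpr ((one_lt_div (hapos n)).mpr (hab n))
  obtain ⟨δfn, hδprop, hδtend, hdiv⟩ :=
    blocks (fun n => b n / a n - 1) (fun n => (hΔpos n).le) hsub
  have H : ∀ n, ∃ A' B' : ℝ, a n ≤ A' ∧ A' < B' ∧ B' ≤ b n ∧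
      B' / A' ≤ 1 + δfn n ∧
      min (b n / a n - 1) (δfn n / 3) ≤ B' / A' - 1 ∧
      (R ≤ (countFn Λ (b n) - countFn Λ (a n)) / (b n - a n) →
        R ≤ (countFn Λ B' - countFn Λ A') / (B' - A')) := fun n =>
    subdivide (countFn Λ) R (a n) (b n) (δfn n) (hapos n) (hab n)
      (hδprop n).1 (hδprop n).2
  choose a' b' h1 h2 h3 h4 h5 h6 using H
  have ha'pos : ∀ n, 0 < a' n := fun n => lt_of_lt_of_le (hapos n) (h1 n)
  have hratio1 : ∀ n, 1 < b' n / a' n := fun n => (one_lt_div (ha'pos n)).mpr (h2 n)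
  have hconv : Tendsto (fun n => b' n / a' n) atTop (nhds 1) := by
    have hup : Tendsto (fun n => 1 + δfn n) atTop (nhds 1) := by
      have h : Tendsto (fun _ : ℕ => (1:ℝ)) atTop (nhds 1) := tendsto_const_nhds
      simpa using h.add hδtend
    exact tendsto_of_tendsto_of_tendsto_of_le_of_le tendsto_const_nhds hup
      (fun n => (hratio1 n).le) (fun n => h4 n)
  refine ⟨hR0, a', b', ⟨?_, ?_⟩, ?_, ?_⟩
  · intro n
    exact ⟨ha'pos n, h2 n, le_trans (h3 n) (le_trans (hstruct n).2.2 (h1 (n+1)))⟩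
  · intro hsum
    apply hdiv
    refine hsum.of_nonneg_of_le (fun n => sq_nonneg _) (fun n => ?_)
    have hmin0 : 0 ≤ min (b n / a n - 1) (δfn n / 3) :=
      le_min (hΔpos n).le (by have := (hδprop n).1; linarith)
    exact pow_le_pow_left₀ hmin0 (h5 n) 2
  · show ratioLimsup a' b' ∈ ({(1:EReal)} : Set EReal)
    have : ratioLimsup a' b' = ((1:ℝ) : EReal) := by
      unfold ratioLimsup
      exact (EReal.tendsto_coe.mpr hconv).limsup_eq
    simp [this]
  · filter_upwards [hrate] with n hn
    exact h6 n hn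

theorem stmt_1 (Λ : ℕ → ℝ) (hmono : StrictMono Λ) (h0 : 0 ≤ Λ 0)
    (htend : Filter.Tendsto Λ Filter.atTop Filter.atTop) :
    bmDensity Λ (Set.Ici (1 : EReal)) = bmDensity Λ {(1 : EReal)} := by
  have h : RSet Λ (Set.Ici (1 : EReal)) = RSet Λ {(1 : EReal)} :=
    subset_antisymm (RSet_subset Λ)
      (RSet_mono Λ (Set.singleton_subset_iff.mpr (Set.self_mem_Ici)))
  unfold bmDensity
  rw [h]
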